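/- Let q be a nonzero complex number, δ a purely imaginary complex number with Im δ > 0, and ζ a complex number with either ζ = δ/2 or ζ = (1+δ)/2. Equip ℂ² with the hermitian form ⟨u,v⟩ = q·u₁·conj(v₂) + conj(q)·u₂·conj(v₁) and set B(u,v) = ⟨u,v⟩ + conj(⟨u,v⟩) (= 2·Re⟨u,v⟩). Define e₁ = (1,0), e₂ = (0, ζ/(δ·conj(q))), e₃ = (−ζ, 0), e₄ = (0, 1/(δ·conj(q))). Then B(eᵢ,eᵢ) = 0 for i = 1,2,3,4; B(e₁,e₂) = 1 and B(e₃,e₄) = 1; and B(eᵢ,eⱼ) = 0 for all other pairs {i,j}, i.e. B(e₁,e₃) = B(e₁,e₄) = B(e₂,e₃) = B(e₂,e₄) = 0. -/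

import Mathlib

open Complex

/-- The hermitian form `⟨u,v⟩ = q·u₁·conj(v₂) + conj(q)·u₂·conj(v₁)` on `ℂ²`. -/
def hermForm (q : ℂ) (u v : ℂ × ℂ) : ℂ :=
  q * u.1 * (starRingEnd ℂ) v.2 + (starRingEnd ℂ) q * u.2 * (starRingEnd ℂ) v.1

/-- The trace bilinear form `B(u,v) = ⟨u,v⟩ + conj(⟨u,v⟩) = 2·Re⟨u,v⟩`. -/
def traceForm (q : ℂ) (u v : ℂ × ℂ) : ℂ :=
  hermForm q u v + (starRingEnd ℂ) (hermForm q u v)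

/-- The vectors `e₁ = (1,0)`, `e₂ = (0, ζ/(δ·conj q))`, `e₃ = (−ζ, 0)`,
`e₄ = (0, 1/(δ·conj q))` split `(ℂ², B)` into two hyperbolic planes:
all are isotropic, `B(e₁,e₂) = B(e₃,e₄) = 1`, and all other pairings vanish. -/
theorem hyperbolic_basis (q δ ζ : ℂ) (hq : q ≠ 0) (hδre : δ.re = 0) (hδim : 0 < δ.im)
    (hζ : ζ = δ / 2 ∨ ζ = (1 + δ) / 2) :
    let e₁ : ℂ × ℂ := (1, 0)
    let e₂ : ℂ × ℂ := (0, ζ / (δ * (starRingEnd ℂ) q))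
    let e₃ : ℂ × ℂ := (-ζ, 0)
    let e₄ : ℂ × ℂ := (0, 1 / (δ * (starRingEnd ℂ) q))
    traceForm q e₁ e₁ = 0 ∧ traceForm q e₂ e₂ = 0 ∧
    traceForm q e₃ e₃ = 0 ∧ traceForm q e₄ e₄ = 0 ∧
    traceForm q e₁ e₂ = 1 ∧ traceForm q e₃ e₄ = 1 ∧
    traceForm q e₁ e₃ = 0 ∧ traceForm q e₁ e₄ = 0 ∧
    traceForm q e₂ e₃ = 0 ∧ traceForm q e₂ e₄ = 0 := by
  have hδ : δ ≠ 0 := fun h => by simp [h] at hδim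
  have hcq : (starRingEnd ℂ) q ≠ 0 := by simpa using hq
  have hcδ : (starRingEnd ℂ) δ = -δ := by
    apply Complex.ext <;> simp [hδre]
  have hζc : (starRingEnd ℂ) ζ = ζ - δ := by
    rcases hζ with h | h <;> subst h <;>
      simp [map_div₀, hcδ, map_ofNat] <;> ring
  intro e₁ e₂ e₃ e₄
  refine ⟨?_, ?_, ?_, ?_, ?_, ?_, ?_, ?_, ?_, ?_⟩ <;>
    simp only [traceForm, hermForm, e₁, e₂, e₃, e₄, map_add, map_mul, map_div₀,
      map_one, map_neg, Complex.conj_conj, hcδ, hζc, mul_zero, zero_mul, map_zero,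
      add_zero, zero_add, mul_one, mul_neg, neg_neg] <;>
    field_simp <;> (try simp only [hcδ, hζc, map_sub]) <;> ring
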